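/- Let h > 0, ν > 0, let k be a nonzero integer, and let s ∈ ℂ with Re(s) > 0. Suppose U, V, P : ℕ → ℂ are square-summable sequences (Σ_j |U_j|² < ∞, Σ_j |V_j|² < ∞, Σ_j |P_j|² < ∞) satisfying, for all j ≥ 1: s·U_j = −i k·P_j − ν k²·U_j + ν·(U_{j+1} − 2U_j + U_{j−1})/h²; s·V_j = −(P_{j+1} − P_{j−1})/(2h) − ν k²·V_j + ν·(V_{j+1} − 2V_j + V_{j−1})/h²; −k²·P_j + (P_{j+1} − 2P_j + P_{j−1})/h² = 0; together with the boundary conditions U_0 = V_0 = 0 and (P_1 − P_0)/h + ν i k·(U_1 − U_0)/h = 0. Then U, V, and P are identically zero. -/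

import Mathlib

open Complex Filter

/-- A square-norm-summable sequence tends to zero. -/
lemma sq_summable_tendsto_zero (f : ℕ → ℂ) (hf : Summable fun j : ℕ => ‖f j‖ ^ 2) :
    Tendsto f atTop (nhds 0) := by
  rw [tendsto_zero_iff_norm_tendsto_zero]
  have h1 : Tendsto (fun j => ‖f j‖ ^ 2) atTop (nhds 0) := hf.tendsto_atTop_zero
  have h2 : Tendsto (fun j => Real.sqrt (‖f j‖ ^ 2)) atTop (nhds (Real.sqrt 0)) :=
    (Real.continuous_sqrt.tendsto 0).comp h1
  simpa [Real.sqrt_sq (norm_nonneg _)] using h2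

/-- Key recurrence lemma: a null sequence satisfying a second-order linear recurrence
with characteristic roots `z, w`, `z * w = 1`, `1 ≤ ‖w‖`, is a multiple of `z ^ j`. -/
lemma geom_rep (f : ℕ → ℂ) (z w : ℂ) (hzw : z * w = 1) (hw : 1 ≤ ‖w‖)
    (hf : Tendsto f atTop (nhds 0))
    (hrec : ∀ j : ℕ, 1 ≤ j → f (j + 1) = (z + w) * f j - f (j - 1)) :
    ∀ j, f j = f 0 * z ^ j := by
  have hgrec : ∀ j : ℕ, 1 ≤ j →
      f (j + 1 + 1) - z * f (j + 1) = w * (f (j + 1) - z * f j) := by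
    intro j hj
    have h1 := hrec (j + 1) (by omega)
    simp only [Nat.add_sub_cancel] at h1
    rw [h1]
    linear_combination (f j) * hzw
  set g : ℕ → ℂ := fun j => f (j + 1) - z * f j with hgdef
  have hgpow : ∀ n : ℕ, g (n + 1) = w ^ n * g 1 := by
    intro n
    induction n with
    | zero => simp
    | succ m ih =>
      have := hgrec (m + 1) (by omega)
      show f (m + 1 + 1 + 1) - z * f (m + 1 + 1) = w ^ (m + 1) * g 1
      rw [this]
      show w * g (m + 1) = w ^ (m + 1) * g 1
      rw [ih]; ring
  have hgt : Tendsto g atTop (nhds 0) := by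
    have h1 : Tendsto (fun j => f (j + 1)) atTop (nhds 0) :=
      hf.comp (tendsto_add_atTop_nat 1)
    have h2 : Tendsto (fun j => z * f j) atTop (nhds 0) := by
      simpa using hf.const_mul z
    simpa using h1.sub h2
  have hg1 : g 1 = 0 := by
    have hle : ∀ n : ℕ, ‖g 1‖ ≤ ‖g (n + 1)‖ := by
      intro n
      rw [hgpow n, norm_mul, norm_pow]
      nlinarith [one_le_pow₀ (n := n) hw, norm_nonneg (g 1)]
    have htz : Tendsto (fun n : ℕ => ‖g (n + 1)‖) atTop (nhds 0) := by
      have := (hgt.comp (tendsto_add_atTop_nat 1)).norm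
      simpa using this
    have : ‖g 1‖ ≤ 0 := ge_of_tendsto' htz hle
    simpa using le_antisymm this (norm_nonneg _)
  have hg0 : g 0 = 0 := by
    have h1 := hrec 1 (by omega)
    simp only [Nat.sub_self] at h1
    have h2 : f 2 - z * f 1 = 0 := hg1
    have h3 : w * f 1 = f 0 := by linear_combination h2 - h1
    show f 1 - z * f 0 = 0
    linear_combination z * h3 - (f 1) * hzw
  have hgz : ∀ j : ℕ, f (j + 1) - z * f j = 0 := by
    intro j
    cases j with
    | zero => exact hg0
    | succ m =>
      show g (m + 1) = 0
      rw [hgpow m, hg1, mul_zero]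
  intro j
  induction j with
  | zero => simp
  | succ m ih =>
    have h1 : f (m + 1) = z * f m := by linear_combination hgz m
    rw [h1, ih]; ring

/-- Existence of a pair of characteristic roots with the small/large normalization. -/
lemma exists_roots (σ : ℂ) :
    ∃ z w : ℂ, z + w = σ ∧ z * w = 1 ∧ ‖z‖ ≤ 1 ∧ 1 ≤ ‖w‖ := by
  obtain ⟨e, he⟩ := IsAlgClosed.exists_pow_nat_eq (σ ^ 2 - 4) (n := 2) (by norm_num)
  have hsum : (σ + e) / 2 + (σ - e) / 2 = σ := by ring
  have hprod : (σ + e) / 2 * ((σ - e) / 2) = 1 := by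
    linear_combination (-(1 : ℂ) / 4) * he
  have hnorm : ‖(σ + e) / 2‖ * ‖(σ - e) / 2‖ = 1 := by
    rw [← norm_mul, hprod, norm_one]
  rcases le_or_gt ‖(σ + e) / 2‖ 1 with hle | hlt
  · refine ⟨(σ + e) / 2, (σ - e) / 2, hsum, hprod, hle, ?_⟩
    nlinarith [norm_nonneg ((σ + e) / 2), norm_nonneg ((σ - e) / 2)]
  · refine ⟨(σ - e) / 2, (σ + e) / 2, by linear_combination hsum, by linear_combination hprod, ?_, le_of_lt hlt⟩
    nlinarith [norm_nonneg ((σ + e) / 2), norm_nonneg ((σ - e) / 2)]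

/-- Godunov–Ryabenkii stability (α = 0): no nontrivial square-summable solution
of the homogeneous semi-discrete Stokes eigenvalue problem exists for Re(s) > 0. -/
theorem stmt_5 (h ν : ℝ) (hh : 0 < h) (hν : 0 < ν)
    (k : ℤ) (hk : k ≠ 0) (s : ℂ) (hs : 0 < s.re)
    (U V P : ℕ → ℂ)
    (hUsum : Summable fun j : ℕ => ‖U j‖ ^ 2)
    (hVsum : Summable fun j : ℕ => ‖V j‖ ^ 2)
    (hPsum : Summable fun j : ℕ => ‖P j‖ ^ 2)
    (hMom1 : ∀ j : ℕ, 1 ≤ j →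
      s * U j = -Complex.I * (k : ℂ) * P j - (ν : ℂ) * (k : ℂ) ^ 2 * U j
        + (ν : ℂ) * ((U (j + 1) - 2 * U j + U (j - 1)) / (h : ℂ) ^ 2))
    (hMom2 : ∀ j : ℕ, 1 ≤ j →
      s * V j = -((P (j + 1) - P (j - 1)) / (2 * (h : ℂ))) - (ν : ℂ) * (k : ℂ) ^ 2 * V j
        + (ν : ℂ) * ((V (j + 1) - 2 * V j + V (j - 1)) / (h : ℂ) ^ 2))
    (hPres : ∀ j : ℕ, 1 ≤ j →
      -(k : ℂ) ^ 2 * P j + (P (j + 1) - 2 * P j + P (j - 1)) / (h : ℂ) ^ 2 = 0)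
    (hU0 : U 0 = 0) (hV0 : V 0 = 0)
    (hBC : (P 1 - P 0) / (h : ℂ)
      + (ν : ℂ) * Complex.I * (k : ℂ) * ((U 1 - U 0) / (h : ℂ)) = 0) :
    (∀ j : ℕ, U j = 0) ∧ (∀ j : ℕ, V j = 0) ∧ (∀ j : ℕ, P j = 0) := by
  
  -- basic nonvanishing facts
  have hh0 : (h : ℂ) ≠ 0 := by exact_mod_cast hh.ne'
  have hν0 : (ν : ℂ) ≠ 0 := by exact_mod_cast hν.ne'
  have hk0 : (k : ℂ) ≠ 0 := by exact_mod_cast hk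
  have hs0 : s ≠ 0 := fun H => by simp [H] at hs
  -- the real parameter a = k² h² and its complex version
  set car : ℝ := (k : ℝ) ^ 2 * h ^ 2 with hcardef
  have hcarpos : 0 < car := by
    have : (k : ℝ) ≠ 0 := by exact_mod_cast hk
    have : 0 < (k : ℝ) ^ 2 := by positivity
    have : 0 < h ^ 2 := by positivity
    simp only [hcardef]
    positivity
  set ca : ℂ := ((car : ℝ) : ℂ) with hcadef
  have hca2 : ca = (k : ℂ) ^ 2 * (h : ℂ) ^ 2 := by
    simp only [hcadef, hcardef]
    push_cast
    ring
  have hcare : ca.re = car := by simp [hcadef]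
  have hcaim : ca.im = 0 := by simp [hcadef]
  -- q = h² s / ν
  set q : ℂ := ((h ^ 2 / ν : ℝ) : ℂ) * s with hqdef
  have hqν : q * (ν : ℂ) = (h : ℂ) ^ 2 * s := by
    simp only [hqdef]
    push_cast
    field_simp
  have hqre : 0 < q.re := by
    have : q.re = (h ^ 2 / ν) * s.re := by
      rw [hqdef, Complex.re_ofReal_mul]
    rw [this]
    have : 0 < h ^ 2 / ν := by positivity
    nlinarith
  have hq0 : q ≠ 0 := fun H => by simp [H] at hqre
  -- pressure recurrence, cleared of denominators
  have hPrec0 : ∀ j : ℕ, 1 ≤ j →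
      P (j + 1) - 2 * P j + P (j - 1) = (k : ℂ) ^ 2 * (h : ℂ) ^ 2 * P j := by
    intro j hj
    have H := hPres j hj
    field_simp at H
    linear_combination H
  have hPrec : ∀ j : ℕ, 1 ≤ j → P (j + 1) = (2 + ca) * P j - P (j - 1) := by
    intro j hj
    have H := hPrec0 j hj
    linear_combination H - P j * hca2
  -- roots of the pressure characteristic polynomial
  obtain ⟨r, wr, hrsum, hrprod, hrle, hwrge⟩ := exists_roots (2 + ca)
  have hrv : r ^ 2 - (2 + ca) * r + 1 = 0 := by
    linear_combination r * hrsum - hrprod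
  have hPrep : ∀ j : ℕ, P j = P 0 * r ^ j := by
    refine geom_rep P r wr hrprod hwrge (sq_summable_tendsto_zero P hPsum) ?_
    intro j hj
    rw [hrsum]
    exact hPrec j hj
  -- strict bound ‖r‖ < 1
  have hrlt : ‖r‖ < 1 := by
    rcases lt_or_eq_of_le hrle with H | H
    · exact H
    · exfalso
      have hnorm : ‖r‖ * ‖wr‖ = 1 := by rw [← norm_mul, hrprod, norm_one]
      have hwr1 : ‖wr‖ = 1 := by rw [← H] at hnorm ⊢; nlinarith [norm_nonneg wr]
      have h1 : (r + wr).re ≤ ‖r + wr‖ := Complex.re_le_norm (r + wr)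
      have h2 : ‖r + wr‖ ≤ ‖r‖ + ‖wr‖ := norm_add_le r wr
      have h3 : (r + wr).re = 2 + car := by rw [hrsum]; simp [hcare]
      rw [h3] at h1
      rw [H, hwr1] at h2
      linarith
  -- momentum recurrence for U, cleared of denominators
  have hUrec0 : ∀ j : ℕ, 1 ≤ j →
      (ν : ℂ) * (U (j + 1) - 2 * U j + U (j - 1)) =
        (h : ℂ) ^ 2 * (s * U j + Complex.I * (k : ℂ) * P j + (ν : ℂ) * (k : ℂ) ^ 2 * U j) := by
    intro j hj
    have H := hMom1 j hj
    field_simp at H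
    linear_combination -H
  -- roots of the velocity characteristic polynomial
  obtain ⟨ρ, wρ, hρsum, hρprod, hρle, hwρge⟩ := exists_roots (2 + ca + q)
  have hρv : ρ ^ 2 - (2 + ca + q) * ρ + 1 = 0 := by
    linear_combination ρ * hρsum - hρprod
  -- the shifted sequence W
  set c0 : ℂ := Complex.I * (k : ℂ) * P 0 / s with hc0def
  have hc0s : c0 * s = Complex.I * (k : ℂ) * P 0 := by
    simp only [hc0def]
    field_simp
  have hWt : Tendsto (fun j : ℕ => U j + c0 * r ^ j) atTop (nhds 0) := by
    have h1 := sq_summable_tendsto_zero U hUsum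
    have h2 : Tendsto (fun j : ℕ => c0 * r ^ j) atTop (nhds 0) := by
      simpa using (tendsto_pow_atTop_nhds_zero_of_norm_lt_one hrlt).const_mul c0
    simpa using h1.add h2
  have hWrec : ∀ j : ℕ, 1 ≤ j →
      (fun j : ℕ => U j + c0 * r ^ j) (j + 1) =
        (ρ + wρ) * (fun j : ℕ => U j + c0 * r ^ j) j
          - (fun j : ℕ => U j + c0 * r ^ j) (j - 1) := by
    intro j hj
    obtain ⟨i, rfl⟩ : ∃ i, j = i + 1 := ⟨j - 1, by omega⟩
    simp only [Nat.add_sub_cancel]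
    rw [hρsum]
    have H := hUrec0 (i + 1) (by omega)
    simp only [Nat.add_sub_cancel] at H
    have hP1 := hPrep (i + 1)
    have key : (ν : ℂ) * ((U (i + 1 + 1) + c0 * r ^ (i + 1 + 1))
        - ((2 + ca + q) * (U (i + 1) + c0 * r ^ (i + 1)) - (U i + c0 * r ^ i))) = 0 := by
      linear_combination H - ((ν : ℂ) * U (i + 1)) * hca2
        - (U (i + 1) + c0 * r ^ (i + 1)) * hqν
        + ((h : ℂ) ^ 2 * Complex.I * (k : ℂ)) * hP1
        - ((h : ℂ) ^ 2 * r ^ (i + 1)) * hc0s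
        + ((ν : ℂ) * c0 * r ^ i) * hrv
    have := (mul_eq_zero.mp key).resolve_left hν0
    linear_combination this
  have hWrep := geom_rep (fun j : ℕ => U j + c0 * r ^ j) ρ wρ hρprod hwρge hWt hWrec
  have hUval : ∀ j : ℕ, U j = c0 * (ρ ^ j - r ^ j) := by
    intro j
    have := hWrep j
    simp only [hU0, zero_add, pow_zero, mul_one] at this
    linear_combination this
  -- boundary condition gives the determinant relation
  have hP1e : P 1 = P 0 * r := by rw [hPrep 1, pow_one]
  have hU1e : U 1 = c0 * (ρ - r) := by rw [hUval 1, pow_one, pow_one]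
  have hBC' : (P 1 - P 0) + (ν : ℂ) * Complex.I * (k : ℂ) * (U 1 - U 0) = 0 := by
    field_simp at hBC
    linear_combination hBC
  have hIsq : Complex.I ^ 2 = -1 := Complex.I_sq
  have hdet : P 0 * (s * (r - 1) - (ν : ℂ) * (k : ℂ) ^ 2 * (ρ - r)) = 0 := by
    linear_combination s * hBC' - s * hP1e - ((ν : ℂ) * Complex.I * (k : ℂ) * s) * hU1e
      + (s * (ν : ℂ) * Complex.I * (k : ℂ)) * hU0
      - ((ν : ℂ) * Complex.I * (k : ℂ) * (ρ - r)) * hc0s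
      - ((ν : ℂ) * (k : ℂ) ^ 2 * (ρ - r) * P 0) * hIsq
  -- the determinant factor does not vanish
  have hP00 : P 0 = 0 := by
    rcases mul_eq_zero.mp hdet with H | hfac
    · exact H
    -- suppose the factor vanishes and derive a contradiction
    exfalso
    have hE : q * (r - 1) = ca * (ρ - r) := by
      have h2 : (ν : ℂ) * (q * (r - 1)) = (ν : ℂ) * (ca * (ρ - r)) := by
        linear_combination (h : ℂ) ^ 2 * hfac + (r - 1) * hqν - (ν : ℂ) * (ρ - r) * hca2
      exact mul_left_cancel₀ hν0 h2
    have hr0 : r ≠ 0 := left_ne_zero_of_mul_eq_one hrprod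
    have hca0 : ca ≠ 0 := by
      simp only [hcadef]
      exact_mod_cast hcarpos.ne'
    have hr1 : r - 1 ≠ 0 := by
      intro H
      have hre : r = 1 := by linear_combination H
      rw [hre] at hrv
      have : ca = 0 := by linear_combination -hrv
      exact hca0 this
    have hrr : (r - 1) * (ρ - r) = q * r := by
      have h3 : (r - 1) * ((r - 1) * (ρ - r) - q * r) = 0 := by
        linear_combination (ρ - r) * hrv - r * hE
      have := (mul_eq_zero.mp h3).resolve_left hr1
      linear_combination this
    have hbig : r * (r - 1) * (q * ((r - 1) ^ 2 + q * r)) = 0 := by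
      linear_combination (r * (r - 1) ^ 3) * hρv
        - (r * (r - 1) ^ 2 * (ρ - 2 - ca - q) + r ^ 2 * (r - 1) * (r - 1 + q)) * hrr
        - (r * (r - 1) ^ 2 * (r - 1 + q)) * hrv
    have h4 : q * ((r - 1) ^ 2 + q * r) = 0 := by
      rcases mul_eq_zero.mp hbig with H | H
      · exact absurd H (mul_ne_zero hr0 hr1)
      · exact H
    have h5 : (r - 1) ^ 2 + q * r = 0 := by
      rcases mul_eq_zero.mp h4 with H | H
      · exact absurd H hq0
      · exact H
    -- (r-1)² = ca r, so r (ca + q) = 0, so ca + q = 0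
    have h6 : r * (ca + q) = 0 := by
      linear_combination h5 - hrv
    have h7 : ca + q = 0 := (mul_eq_zero.mp h6).resolve_left hr0
    have : (ca + q).re = 0 := by rw [h7]; simp
    rw [Complex.add_re, hcare] at this
    linarith
  -- conclude
  have hPall : ∀ j : ℕ, P j = 0 := by
    intro j; rw [hPrep j, hP00, zero_mul]
  have hc00 : c0 = 0 := by simp [hc0def, hP00]
  have hUall : ∀ j : ℕ, U j = 0 := by
    intro j; rw [hUval j, hc00, zero_mul]
  -- V satisfies the homogeneous recurrence
  have hVrec : ∀ j : ℕ, 1 ≤ j → V (j + 1) = (ρ + wρ) * V j - V (j - 1) := by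
    intro j hj
    have H := hMom2 j hj
    rw [hPall (j + 1), hPall (j - 1)] at H
    have H2 : (ν : ℂ) * (V (j + 1) - 2 * V j + V (j - 1)) =
        (h : ℂ) ^ 2 * (s * V j + (ν : ℂ) * (k : ℂ) ^ 2 * V j) := by
      field_simp at H
      linear_combination (-1/2 : ℂ) * H
    rw [hρsum]
    have key : (ν : ℂ) * (V (j + 1) - ((2 + ca + q) * V j - V (j - 1))) = 0 := by
      linear_combination H2 - ((ν : ℂ) * V j) * hca2 - (V j) * hqν
    have := (mul_eq_zero.mp key).resolve_left hν0
    linear_combination this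
  have hVrep := geom_rep V ρ wρ hρprod hwρge (sq_summable_tendsto_zero V hVsum) hVrec
  have hVall : ∀ j : ℕ, V j = 0 := by
    intro j; rw [hVrep j, hV0, zero_mul]
  exact ⟨hUall, hVall, hPall⟩
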